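/- For every s ≥ 1 there exists a polynomial Q_s ∈ ℝ[X] of degree at most s such that F̂_s(z) = z²·Q_s(z²)/(1−z²)^{3(s+1)/2} for all z ∈ (0,1), where (1−z²)^{3(s+1)/2} denotes the real power of the positive number 1−z². -/

import Mathlib

open Polynomial Real

private lemma aux_hasDerivAt (Q : ℝ[X]) (a : ℝ) (z : ℝ) (hz : z^2 < 1) :
    HasDerivAt (fun z : ℝ => z^2 * Q.eval (z^2) * (1 - z^2) ^ (-a))
      ((2*z * Q.eval (z^2) + z^2 * ((derivative Q).eval (z^2) * (2*z))) * (1 - z^2) ^ (-a)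
        + z^2 * Q.eval (z^2) * ((0 - 2*z) * (-a) * (1 - z^2) ^ (-a - 1))) z := by
  have h1 : HasDerivAt (fun z : ℝ => z^2) (2*z) z := by
    simpa using hasDerivAt_pow 2 z
  have h2 : HasDerivAt (fun z : ℝ => Q.eval (z^2)) ((derivative Q).eval (z^2) * (2*z)) z :=
    by have := (Q.hasDerivAt (z^2)).comp z h1; exact this
  have h3 : HasDerivAt (fun z : ℝ => 1 - z^2) (0 - 2*z) z := (hasDerivAt_const z 1).sub h1
  have h4 : HasDerivAt (fun z : ℝ => (1 - z^2) ^ (-a))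
      ((0 - 2*z) * (-a) * (1 - z^2) ^ (-a - 1)) z :=
    h3.rpow_const (Or.inl (by nlinarith))
  exact (h1.mul h2).mul h4


/-- For the Liouville–Green coefficient functions `F s` of
Bessel's equation on `(0,1)`, defined by `F 1 z = z²(z²+4)/(8(z²-1)³)` and
`F (s+1) z = (z/(2√(1-z²)))·(F s)'(z) - (1/2) ∑_{j=1}^{s-1} F j z · F (s-j) z`,
for every `s ≥ 1` there is a polynomial `Q` of degree at most `s` with
`F s z = z²·Q(z²)/(1-z²)^{3(s+1)/2}` on `(0,1)`. -/
theorem stmt3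
    (F : ℕ → ℝ → ℝ)
    (hF1 : ∀ z ∈ Set.Ioo (0:ℝ) 1, F 1 z = z^2 * (z^2 + 4) / (8 * (z^2 - 1)^3))
    (hFrec : ∀ s, 1 ≤ s → ∀ z ∈ Set.Ioo (0:ℝ) 1,
      F (s+1) z = z / (2 * Real.sqrt (1 - z^2)) * deriv (F s) z
        - (1/2) * ∑ j ∈ Finset.Icc 1 (s-1), F j z * F (s-j) z) :
    ∀ s, 1 ≤ s → ∃ Q : Polynomial ℝ, Q.natDegree ≤ s ∧
      ∀ z ∈ Set.Ioo (0:ℝ) 1,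
        F s z = z^2 * Q.eval (z^2) / (1 - z^2) ^ ((3 * ((s:ℝ) + 1)) / 2) := by
  have key : ∀ s, 1 ≤ s → ∃ Q : Polynomial ℝ, Q.natDegree ≤ s ∧
      ∀ z ∈ Set.Ioo (0:ℝ) 1,
        F s z = z^2 * Q.eval (z^2) * (1 - z^2) ^ (-(3 * ((s:ℝ) + 1) / 2)) := by
    intro s
    induction s using Nat.strong_induction_on with
    | _ s IH =>
    intro hs
    obtain ⟨t, rfl⟩ : ∃ t, s = t + 1 := ⟨s - 1, (Nat.succ_pred_eq_of_pos hs).symm⟩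
    match t with
    | 0 =>
      refine ⟨C (-(1/8)) * (X + C 4), ?_, ?_⟩
      · exact (natDegree_mul_le).trans (by simp [natDegree_add_le])
      · intro z hz
        have hb : (0:ℝ) < 1 - z^2 := by nlinarith [hz.1, hz.2]
        have hexp : (1 - z^2) ^ (-(3 * (((0+1:ℕ):ℝ) + 1) / 2)) = ((1 - z^2)^(3:ℕ))⁻¹ := by
          rw [show (-(3 * (((0+1:ℕ):ℝ) + 1) / 2)) = -((3:ℕ):ℝ) by push_cast; ring,
            Real.rpow_neg hb.le, Real.rpow_natCast]
        rw [hF1 z hz, hexp]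
        have h8 : (8 * (z^2 - 1)^3 : ℝ) ≠ 0 := by
          intro h; nlinarith [pow_pos hb 3]
        have hbn : ((1 - z^2)^(3:ℕ) : ℝ) ≠ 0 := pow_ne_zero _ (ne_of_gt hb)
        simp only [eval_mul, eval_add, eval_C, eval_X]
        rw [← div_eq_mul_inv, div_eq_div_iff h8 hbn]
        ring
    | k + 1 =>
      -- inductive step: s = k + 2
      have hGex : ∀ j : ℕ, ∃ Q : ℝ[X], 1 ≤ j → j ≤ k+1 → Q.natDegree ≤ j ∧
          ∀ z ∈ Set.Ioo (0:ℝ) 1,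
            F j z = z^2 * Q.eval (z^2) * (1 - z^2) ^ (-(3 * ((j:ℝ) + 1) / 2)) := by
        intro j
        by_cases h : 1 ≤ j ∧ j ≤ k+1
        · obtain ⟨Q, h1, h2⟩ := IH j (by omega) h.1
          exact ⟨Q, fun _ _ => ⟨h1, h2⟩⟩
        · exact ⟨0, fun h1 h2 => absurd ⟨h1, h2⟩ h⟩
      choose G hG using hGex
      obtain ⟨hPdeg, hPev⟩ := hG (k+1) (by omega) le_rfl
      set P : ℝ[X] := G (k+1) with hP
      set a : ℝ := 3 * (((k+1:ℕ):ℝ) + 1) / 2 with ha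
      set Qnew : ℝ[X] := (P + X * derivative P) * (1 - X) + C a * (X * P)
          - C (1/2) * (X * ∑ j ∈ Finset.Icc 1 k, G j * G (k+1-j)) with hQnew
      refine ⟨Qnew, ?_, ?_⟩
      · -- degree bound
        have d1 : ((P + X * derivative P) * (1 - X)).natDegree ≤ k + 2 := by
          refine natDegree_mul_le.trans ?_
          have : (P + X * derivative P).natDegree ≤ k + 1 := by
            refine (natDegree_add_le _ _).trans (max_le hPdeg ?_)
            refine natDegree_mul_le.trans ?_
            have := natDegree_derivative_le P
            simp only [natDegree_X]
            omega
          have h2 : (1 - X : ℝ[X]).natDegree ≤ 1 :=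
            (natDegree_sub_le _ _).trans (by simp)
          omega
        have d2 : (C a * (X * P)).natDegree ≤ k + 2 := by
          refine natDegree_mul_le.trans ?_
          have : (X * P).natDegree ≤ k + 2 :=
            natDegree_mul_le.trans (by simp only [natDegree_X]; omega)
          simp only [natDegree_C]
          omega
        have d3 : (C (1/2:ℝ) * (X * ∑ j ∈ Finset.Icc 1 k, G j * G (k+1-j))).natDegree ≤ k + 2 := by
          refine natDegree_mul_le.trans ?_
          have hsum : (∑ j ∈ Finset.Icc 1 k, G j * G (k+1-j)).natDegree ≤ k + 1 := by
            refine natDegree_sum_le_of_forall_le _ _ ?_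
            intro j hj
            simp only [Finset.mem_Icc] at hj
            refine natDegree_mul_le.trans ?_
            have g1 := (hG j hj.1 (by omega)).1
            have g2 := (hG (k+1-j) (by omega) (by omega)).1
            omega
          have : (X * ∑ j ∈ Finset.Icc 1 k, G j * G (k+1-j)).natDegree ≤ k + 2 :=
            natDegree_mul_le.trans (by simp only [natDegree_X]; omega)
          simp only [natDegree_C]
          omega
        calc Qnew.natDegree ≤ _ := natDegree_sub_le _ _
          _ ≤ k + 2 := max_le ((natDegree_add_le _ _).trans (max_le d1 d2)) d3
      · intro z hz
        obtain ⟨hz0, hz1⟩ := hz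
        have hzsq : z^2 < 1 := by nlinarith
        have hb : (0:ℝ) < 1 - z^2 := by nlinarith
        set c : ℝ := a + 3/2 with hc
        -- derivative of F (k+1) at z
        have hfe : F (k+1) =ᶠ[nhds z] fun y => y^2 * P.eval (y^2) * (1 - y^2) ^ (-a) :=
          Filter.eventuallyEq_of_mem (isOpen_Ioo.mem_nhds ⟨hz0, hz1⟩)
            (fun y hy => hPev y hy)
        have hderiv : deriv (F (k+1)) z =
            (2*z * P.eval (z^2) + z^2 * ((derivative P).eval (z^2) * (2*z))) * (1 - z^2) ^ (-a)
              + z^2 * P.eval (z^2) * ((0 - 2*z) * (-a) * (1 - z^2) ^ (-a - 1)) := by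
          rw [hfe.deriv_eq, (aux_hasDerivAt P a z hzsq).deriv]
        -- rpow identities
        have hsq : Real.sqrt (1 - z^2) = (1 - z^2) ^ (1/2 : ℝ) := Real.sqrt_eq_rpow _
        have hB : (0:ℝ) < (1 - z^2) ^ (1/2 : ℝ) := Real.rpow_pos_of_pos hb _
        have hA1 : (1 - z^2) ^ (-a) = (1 - z^2) ^ (-c) * ((1 - z^2) * (1 - z^2) ^ (1/2:ℝ)) := by
          rw [show (-a) = (-c) + 1 + (1/2:ℝ) by rw [hc]; ring, Real.rpow_add hb,
            Real.rpow_add hb, Real.rpow_one, mul_assoc]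
        have hA2 : (1 - z^2) ^ (-a - 1) = (1 - z^2) ^ (-c) * (1 - z^2) ^ (1/2:ℝ) := by
          rw [show (-a - 1) = (-c) + (1/2:ℝ) by rw [hc]; ring, Real.rpow_add hb]
        have hexp : (-(3 * (((k+1+1:ℕ):ℝ) + 1) / 2)) = -c := by
          rw [hc, ha]; push_cast; ring
        -- rewrite the sum
        have hsum : ∑ j ∈ Finset.Icc 1 k, F j z * F (k+1-j) z
            = z^4 * (∑ j ∈ Finset.Icc 1 k, (G j).eval (z^2) * (G (k+1-j)).eval (z^2))
              * (1 - z^2) ^ (-c) := by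
          rw [Finset.mul_sum, Finset.sum_mul]
          refine Finset.sum_congr rfl ?_
          intro j hj
          simp only [Finset.mem_Icc] at hj
          rw [(hG j hj.1 (by omega)).2 z ⟨hz0, hz1⟩, (hG (k+1-j) (by omega) (by omega)).2 z ⟨hz0, hz1⟩]
          have hcast : ((k+1-j : ℕ) : ℝ) = (k:ℝ) + 1 - (j:ℝ) := by
            rw [Nat.cast_sub (by omega)]; push_cast; ring
          rw [hcast]
          have hcomb : (1 - z^2) ^ (-(3 * ((j:ℝ) + 1) / 2))
              * (1 - z^2) ^ (-(3 * (((k:ℝ) + 1 - (j:ℝ)) + 1) / 2)) = (1 - z^2) ^ (-c) := by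
            rw [← Real.rpow_add hb]
            congr 1
            rw [hc, ha]; push_cast; ring
          calc z^2 * (G j).eval (z^2) * (1 - z^2) ^ (-(3 * ((j:ℝ) + 1) / 2))
              * (z^2 * (G (k+1-j)).eval (z^2) * (1 - z^2) ^ (-(3 * (((k:ℝ) + 1 - (j:ℝ)) + 1) / 2)))
              = z^4 * ((G j).eval (z^2) * (G (k+1-j)).eval (z^2))
                * ((1 - z^2) ^ (-(3 * ((j:ℝ) + 1) / 2))
                  * (1 - z^2) ^ (-(3 * (((k:ℝ) + 1 - (j:ℝ)) + 1) / 2))) := by ring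
            _ = _ := by rw [hcomb]
        have hrec := hFrec (k+1) (by omega) z ⟨hz0, hz1⟩
        simp only [Nat.add_sub_cancel] at hrec
        rw [hexp, hrec, hderiv, hsum, hsq, hA1, hA2, hQnew]
        simp only [eval_sub, eval_add, eval_mul, eval_C, eval_X, eval_one, eval_finset_sum]
        field_simp
        ring
  intro s hs
  obtain ⟨Q, hd, hQ⟩ := key s hs
  refine ⟨Q, hd, fun z hz => ?_⟩
  have hb : (0:ℝ) < 1 - z^2 := by nlinarith [hz.1, hz.2]
  rw [hQ z hz, Real.rpow_neg hb.le]
  exact (div_eq_mul_inv _ _).symm
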